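/- Let n ≥ 2 and let L be a well-rounded lattice in ℝⁿ with minimal norm 1 possessing a nearly orthogonal basis. Then C(L) = 0 if and only if L is the image of ℤⁿ under an orthogonal transformation, i.e., if and only if L is spanned over ℤ by an orthonormal basis of ℝⁿ. -/

import Mathlib

open scoped RealInnerProductSpace
open Submodule Metric MeasureTheory

noncomputable section

abbrev Evec (n : ℕ) := EuclideanSpace ℝ (Fin n)

/-- The lattice generated (over ℤ) by the vectors `b 0, …, b (n-1)`. -/
def latticeOf {n : ℕ} (b : Fin n → Evec n) : Set (Evec n) :=
  {x | ∃ c : Fin n → ℤ, x = ∑ i, (c i : ℝ) • b i}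

/-- The set of minimal vectors `S(L)` of a lattice `L`. -/
def minVecs {n : ℕ} (L : Set (Evec n)) : Set (Evec n) :=
  {x | x ∈ L ∧ x ≠ 0 ∧ ∀ y ∈ L, y ≠ 0 → ‖x‖ ≤ ‖y‖}

/-- `L` is well-rounded: its minimal vectors span `ℝⁿ`. -/
def IsWellRounded {n : ℕ} (L : Set (Evec n)) : Prop :=
  Submodule.span ℝ (minVecs L) = ⊤

/-- `L` has minimal norm `m`. -/
def hasMinNorm {n : ℕ} (L : Set (Evec n)) (m : ℝ) : Prop :=
  (∃ x ∈ L, x ≠ 0 ∧ ‖x‖ = m) ∧ ∀ x ∈ L, x ≠ 0 → m ≤ ‖x‖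

/-- The angle in `[0, π/2]` between a vector `v` and a subspace `V`,
whose cosine is `‖proj_V v‖ / ‖v‖`. -/
def subAngle {n : ℕ} (v : Evec n) (V : Submodule ℝ (Evec n)) : ℝ :=
  Real.arccos (‖(orthogonalProjection V v : Evec n)‖ / ‖v‖)

/-- The ordered basis `b` is weakly θ-orthogonal. -/
def WeaklyOrth {n : ℕ} (θ : ℝ) (b : Fin n → Evec n) : Prop :=
  ∀ i : Fin n, 0 < (i : ℕ) →
    θ ≤ subAngle (b i) (Submodule.span ℝ (b '' {j | j < i}))

/-- The basis `b` is θ-orthogonal: every ordering of it is weakly θ-orthogonal. -/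
def Orth {n : ℕ} (θ : ℝ) (b : Fin n → Evec n) : Prop :=
  ∀ σ : Equiv.Perm (Fin n), WeaklyOrth θ (b ∘ σ)

/-- A nearly orthogonal basis is a π/3-orthogonal basis. -/
def NearlyOrth {n : ℕ} (b : Fin n → Evec n) : Prop := Orth (Real.pi / 3) b

/-- A weakly nearly orthogonal basis is a weakly π/3-orthogonal basis. -/
def WeaklyNearlyOrth {n : ℕ} (b : Fin n → Evec n) : Prop := WeaklyOrth (Real.pi / 3) b

/-- Coherence `C(L)` of a lattice. -/
def coherence {n : ℕ} (L : Set (Evec n)) : ℝ :=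
  sSup {t | ∃ x ∈ minVecs L, ∃ y ∈ minVecs L, x ≠ y ∧ x ≠ -y ∧
    t = abs ⟪x, y⟫ / (‖x‖ * ‖y‖)}

/-- `μ(B)`: minimal absolute cosine of angles between distinct basis vectors. -/
def muB {n : ℕ} (b : Fin n → Evec n) : ℝ :=
  sInf {t | ∃ i j : Fin n, i ≠ j ∧ t = abs ⟪b i, b j⟫ / (‖b i‖ * ‖b j‖)}

/-- `ν(B)`: maximal absolute cosine of angles between distinct basis vectors. -/
def nuB {n : ℕ} (b : Fin n → Evec n) : ℝ :=
  sSup {t | ∃ i j : Fin n, i ≠ j ∧ t = abs ⟪b i, b j⟫ / (‖b i‖ * ‖b j‖)}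

/-- The determinant of the lattice with basis `b`. -/
def latDet {n : ℕ} (b : Fin n → Evec n) : ℝ :=
  |(Matrix.of fun i j : Fin n => b j i).det|

/-- Packing density of a lattice with basis `b` and minimal norm `m`:
`ω_n · m^n / (2^n · det L)`. -/
def packDensity {n : ℕ} (m : ℝ) (b : Fin n → Evec n) : ℝ :=
  (volume (ball (0 : Evec n) 1)).toReal * m ^ n / (2 ^ n * latDet b)

/-- `L` is strongly eutactic. -/
def StronglyEutactic {n : ℕ} (L : Set (Evec n)) : Prop :=
  ∃ c : ℝ, 0 < c ∧ ∀ v : Evec n, ‖v‖ ^ 2 = c * ∑ᶠ x ∈ minVecs L, ⟪v, x⟫ ^ 2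

/-- `L` is perfect: `{x xᵀ : x ∈ S(L)}` spans the symmetric `n × n` matrices. -/
def IsPerfect {n : ℕ} (L : Set (Evec n)) : Prop :=
  ∀ A : Matrix (Fin n) (Fin n) ℝ, A.IsSymm →
    A ∈ Submodule.span ℝ ((fun x : Evec n => Matrix.of fun i j => x i * x j) '' minVecs L)

end

section Helpers

variable {n : ℕ}

lemma mem_latticeOf (b : Fin n → Evec n) (c : Fin n → ℤ) :
    (∑ i, (c i : ℝ) • b i) ∈ latticeOf b := ⟨c, rfl⟩

lemma sum_single_eq (b : Fin n → Evec n) (p : Fin n) :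
    ∑ i, (((Pi.single p 1 : Fin n → ℤ) i : ℤ) : ℝ) • b i = b p := by
  rw [Finset.sum_eq_single p]
  · simp
  · intro i _ hip
    rw [Pi.single_eq_of_ne hip]
    simp
  · intro h; exact absurd (Finset.mem_univ p) h

lemma sum_single_real (b : Fin n → Evec n) (p : Fin n) :
    ∑ i, (Pi.single p (1:ℝ) : Fin n → ℝ) i • b i = b p := by
  rw [Finset.sum_eq_single p]
  · simp
  · intro i _ hip
    rw [Pi.single_eq_of_ne hip]
    simp
  · intro h; exact absurd (Finset.mem_univ p) h

lemma basis_mem_latticeOf (b : Fin n → Evec n) (p : Fin n) : b p ∈ latticeOf b :=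
  ⟨(Pi.single p 1 : Fin n → ℤ), (sum_single_eq b p).symm⟩

lemma neg_mem_latticeOf {b : Fin n → Evec n} {x : Evec n} (hx : x ∈ latticeOf b) :
    -x ∈ latticeOf b := by
  obtain ⟨c, rfl⟩ := hx
  refine ⟨fun i => -c i, ?_⟩
  simp [neg_smul, Finset.sum_neg_distrib]

lemma minVecs_norm_one {L : Set (Evec n)} (hmin : hasMinNorm L 1) {x : Evec n}
    (hx : x ∈ minVecs L) : ‖x‖ = 1 := by
  obtain ⟨⟨y, hyL, hy0, hy1⟩, hlow⟩ := hmin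
  have h1 := hx.2.2 y hyL hy0
  have h2 := hlow x hx.1 hx.2.1
  rw [hy1] at h1
  linarith

lemma mem_minVecs_of_norm_one {L : Set (Evec n)} (hmin : hasMinNorm L 1) {x : Evec n}
    (hxL : x ∈ L) (hx1 : ‖x‖ = 1) : x ∈ minVecs L := by
  refine ⟨hxL, ?_, ?_⟩
  · intro h; rw [h] at hx1; simp at hx1
  · intro y hy hy0
    rw [hx1]
    exact hmin.2 y hy hy0

lemma neg_mem_minVecs {b : Fin n → Evec n} {x : Evec n}
    (hx : x ∈ minVecs (latticeOf b)) : -x ∈ minVecs (latticeOf b) := by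
  refine ⟨neg_mem_latticeOf hx.1, by simpa using hx.2.1, ?_⟩
  intro y hy hy0
  rw [norm_neg]
  exact hx.2.2 y hy hy0

/-- If the coherence is zero then any two non-proportional minimal vectors are orthogonal. -/
lemma coherence_zero_orth {L : Set (Evec n)} (hC : coherence L = 0)
    {x y : Evec n} (hx : x ∈ minVecs L) (hy : y ∈ minVecs L)
    (hxy : x ≠ y) (hxy' : x ≠ -y) : ⟪x, y⟫ = 0 := by
  have hx0 : x ≠ 0 := hx.2.1
  have hy0 : y ≠ 0 := hy.2.1
  have hxn : 0 < ‖x‖ := norm_pos_iff.2 hx0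
  have hyn : 0 < ‖y‖ := norm_pos_iff.2 hy0
  set T := {t | ∃ x ∈ minVecs L, ∃ y ∈ minVecs L, x ≠ y ∧ x ≠ -y ∧
    t = abs ⟪x, y⟫ / (‖x‖ * ‖y‖)} with hT
  have hbdd : BddAbove T := by
    refine ⟨1, ?_⟩
    rintro t ⟨a, ha, c, hc, _, _, rfl⟩
    have ha0 : 0 < ‖a‖ := norm_pos_iff.2 ha.2.1
    have hc0 : 0 < ‖c‖ := norm_pos_iff.2 hc.2.1
    rw [div_le_one (by positivity)]
    exact abs_real_inner_le_norm a c
  have hmem : abs ⟪x, y⟫ / (‖x‖ * ‖y‖) ∈ T := ⟨x, hx, y, hy, hxy, hxy', rfl⟩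
  have hle : abs ⟪x, y⟫ / (‖x‖ * ‖y‖) ≤ 0 := by
    have := le_csSup hbdd hmem
    rw [← hC]; exact this
  have hge : 0 ≤ abs ⟪x, y⟫ / (‖x‖ * ‖y‖) := by positivity
  have : abs ⟪x, y⟫ / (‖x‖ * ‖y‖) = 0 := le_antisymm hle hge
  have habs : abs ⟪x, y⟫ = 0 := by
    rcases div_eq_zero_iff.1 this with h | h
    · exact h
    · exact absurd h (by positivity)
  exact abs_eq_zero.1 habs

lemma cross_bound {V : Submodule ℝ (Evec n)} {v w : Evec n}
    (hp : ‖(orthogonalProjection V w : Evec n)‖ ≤ ‖w‖ / 2) (hv : v ∈ V) :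
    |⟪v, w⟫| ≤ ‖v‖ * ‖w‖ / 2 := by
  have hw : w - (orthogonalProjection V w : Evec n) ∈ Vᗮ :=
    V.sub_starProjection_mem_orthogonal w
  have h0 : ⟪v, w - (orthogonalProjection V w : Evec n)⟫ = 0 :=
    (Submodule.mem_orthogonal V _).1 hw v hv
  have h1 : ⟪v, w⟫ = ⟪v, (orthogonalProjection V w : Evec n)⟫ := by
    have := inner_sub_right (𝕜 := ℝ) v w (orthogonalProjection V w : Evec n)
    rw [h0] at this
    linarith
  rw [h1]
  calc |⟪v, (orthogonalProjection V w : Evec n)⟫| ≤ ‖v‖ * ‖(orthogonalProjection V w : Evec n)‖ :=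
        abs_real_inner_le_norm _ _
    _ ≤ ‖v‖ * (‖w‖ / 2) := by
        apply mul_le_mul_of_nonneg_left hp (norm_nonneg v)
    _ = ‖v‖ * ‖w‖ / 2 := by ring

lemma low_bound {V : Submodule ℝ (Evec n)} {v w : Evec n}
    (hp : ‖(orthogonalProjection V w : Evec n)‖ ≤ ‖w‖ / 2) (hv : v ∈ V) (c : ℝ) :
    3 / 4 * c ^ 2 * ‖w‖ ^ 2 ≤ ‖v + c • w‖ ^ 2 := by
  set q : Evec n := (orthogonalProjection V w : Evec n) with hq
  set z : Evec n := w - q with hz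
  have hzV : z ∈ Vᗮ := V.sub_starProjection_mem_orthogonal w
  have hqV : q ∈ V := (orthogonalProjection V w).2
  have hvz : ⟪v, z⟫ = 0 := (Submodule.mem_orthogonal V _).1 hzV v hv
  have hqz : ⟪q, z⟫ = 0 := (Submodule.mem_orthogonal V _).1 hzV q hqV
  have hwz : ⟪w, z⟫ = ‖z‖ ^ 2 := by
    have : w = q + z := by rw [hz]; abel
    rw [this, inner_add_left, hqz, real_inner_self_eq_norm_sq]
    ring
  have hpyth : ‖w‖ ^ 2 = ‖q‖ ^ 2 + ‖z‖ ^ 2 := by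
    have hwqz : w = q + z := by rw [hz]; abel
    have := norm_add_sq_real q z
    rw [← hwqz] at this
    rw [this]
    linarith [hqz]
  have hzge : 3 / 4 * ‖w‖ ^ 2 ≤ ‖z‖ ^ 2 := by
    have : ‖q‖ ^ 2 ≤ (‖w‖ / 2) ^ 2 := by
      apply sq_le_sq' _ hp
      have := norm_nonneg q
      have := norm_nonneg w
      linarith
    nlinarith
  have hinner : ⟪v + c • w, z⟫ = c * ‖z‖ ^ 2 := by
    rw [inner_add_left, hvz, real_inner_smul_left, hwz]; ring
  have hcs : |⟪v + c • w, z⟫| ≤ ‖v + c • w‖ * ‖z‖ := abs_real_inner_le_norm _ _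
  rw [hinner, abs_mul] at hcs
  have habs : |‖z‖ ^ 2| = ‖z‖ ^ 2 := abs_of_nonneg (sq_nonneg _)
  rw [habs] at hcs
  rcases eq_or_lt_of_le (norm_nonneg z) with hz0 | hz0
  · have : ‖z‖ ^ 2 = 0 := by rw [← hz0]; ring
    have hw0 : ‖w‖ ^ 2 ≤ 0 := by nlinarith
    nlinarith [sq_nonneg ‖v + c • w‖, sq_nonneg c, sq_nonneg ‖w‖]
  · have h2 : |c| * ‖z‖ ≤ ‖v + c • w‖ := by
      have h := le_of_mul_le_mul_right (by nlinarith : (|c| * ‖z‖) * ‖z‖ ≤ ‖v + c • w‖ * ‖z‖) hz0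
      exact h
    have h3 : c ^ 2 * ‖z‖ ^ 2 ≤ ‖v + c • w‖ ^ 2 := by
      have h4 := pow_le_pow_left₀ (by positivity : (0:ℝ) ≤ |c| * ‖z‖) h2 2
      calc c ^ 2 * ‖z‖ ^ 2 = (|c| * ‖z‖) ^ 2 := by rw [mul_pow, sq_abs]
        _ ≤ ‖v + c • w‖ ^ 2 := h4
    have h5 : c ^ 2 * (3 / 4 * ‖w‖ ^ 2) ≤ c ^ 2 * ‖z‖ ^ 2 :=
      mul_le_mul_of_nonneg_left hzge (sq_nonneg c)
    linarith

lemma angle_extract (hn : 2 ≤ n) {b : Fin n → Evec n} (hNO : NearlyOrth b)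
    (p : Fin n) :
    Real.pi / 3 ≤ subAngle (b p) (Submodule.span ℝ (b '' {i | i ≠ p})) := by
  have hn0 : 0 < n := by omega
  set last : Fin n := ⟨n - 1, by omega⟩ with hlast
  set σ : Equiv.Perm (Fin n) := Equiv.swap p last with hσ
  have h := hNO σ last (by simp [hlast]; omega)
  have h1 : (b ∘ σ) last = b p := by simp [hσ, Equiv.swap_apply_right]
  have h2 : (b ∘ σ) '' {j | j < last} = b '' {i | i ≠ p} := by
    rw [Set.image_comp]
    have himg : ⇑σ '' {j : Fin n | j < last} = {i : Fin n | i ≠ p} := by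
      have hset : {j : Fin n | j < last} = {last}ᶜ := by
        ext j
        simp only [Set.mem_setOf_eq, Set.mem_compl_iff, Set.mem_singleton_iff, Fin.lt_def,
          Fin.ext_iff, hlast]
        have := j.isLt
        omega
      rw [hset, Set.image_compl_eq σ.bijective, Set.image_singleton]
      have : σ last = p := by rw [hσ]; exact Equiv.swap_apply_right p last
      rw [this]
      rfl
    rw [himg]
  rw [← h1, ← h2]
  exact h

lemma proj_half (hn : 2 ≤ n) {b : Fin n → Evec n} (hNO : NearlyOrth b) (p : Fin n) :
    ‖(orthogonalProjection (Submodule.span ℝ (b '' {i | i ≠ p})) (b p) : Evec n)‖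
      ≤ ‖b p‖ / 2 := by
  set V := Submodule.span ℝ (b '' {i | i ≠ p}) with hV
  have h := angle_extract hn hNO p
  by_cases hv : b p = 0
  · simp [hv]
  have hvn : 0 < ‖b p‖ := norm_pos_iff.2 hv
  set r : ℝ := ‖(orthogonalProjection V (b p) : Evec n)‖ / ‖b p‖ with hr
  have hr0 : 0 ≤ r := by positivity
  have hr1 : r ≤ 1 := by
    rw [hr, div_le_one hvn]
    have h1 := (orthogonalProjection V).le_opNorm (b p)
    have h2 : ‖orthogonalProjection V‖ ≤ 1 := orthogonalProjection_norm_le V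
    have h3 : ‖(orthogonalProjection V (b p) : Evec n)‖ = ‖orthogonalProjection V (b p)‖ := rfl
    nlinarith [norm_nonneg (b p)]
  have hcos : Real.cos (Real.arccos r) ≤ Real.cos (Real.pi / 3) :=
    Real.cos_le_cos_of_nonneg_of_le_pi (by positivity) (Real.arccos_le_pi r) h
  rw [Real.cos_arccos (by linarith) hr1, Real.cos_pi_div_three] at hcos
  rw [hr, div_le_div_iff₀ hvn (by norm_num : (0:ℝ) < 2)] at hcos
  linarith

end Helpers


set_option maxHeartbeats 1000000 in
/-- Under zero coherence, every minimal vector is `± b p` for some basis vector of norm one. -/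
lemma min_is_pm_basis {n : ℕ} (hn : 2 ≤ n) {b : Fin n → Evec n} (hb : LinearIndependent ℝ b)
    (hmin : hasMinNorm (latticeOf b) 1) (hNO : NearlyOrth b)
    (hC : coherence (latticeOf b) = 0) {x : Evec n} (hx : x ∈ minVecs (latticeOf b)) :
    ∃ p : Fin n, (x = b p ∨ x = -b p) ∧ ‖b p‖ = 1 := by
  obtain ⟨c, hc⟩ := hx.1
  have hx1 : ‖x‖ = 1 := minVecs_norm_one hmin hx
  have hbne : ∀ i, b i ≠ 0 := fun i => hb.ne_zero i
  have hbnorm : ∀ i, 1 ≤ ‖b i‖ := fun i => hmin.2 _ (basis_mem_latticeOf b i) (hbne i)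
  -- the "tail" of x at p
  set v : Fin n → Evec n := fun p => ∑ i ∈ Finset.univ.erase p, (c i : ℝ) • b i with hv
  have hsplit : ∀ p, x = v p + (c p : ℝ) • b p := by
    intro p
    rw [hc, ← Finset.sum_erase_add _ _ (Finset.mem_univ p)]
  have hvV : ∀ p, v p ∈ Submodule.span ℝ (b '' {i | i ≠ p}) := by
    intro p
    apply Submodule.sum_mem
    intro i hi
    exact Submodule.smul_mem _ _
      (Submodule.subset_span ⟨i, (Finset.mem_erase.1 hi).1, rfl⟩)
  have hbound : ∀ p, 3 / 4 * ((c p : ℝ)) ^ 2 * ‖b p‖ ^ 2 ≤ 1 := by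
    intro p
    have h := low_bound (proj_half hn hNO p) (hvV p) ((c p : ℝ))
    rw [← hsplit p, hx1] at h
    simpa using h
  have hcp1 : ∀ p, c p ≠ 0 → c p = 1 ∨ c p = -1 := by
    intro p hp
    have h1 : 1 ≤ (c p) ^ 2 := by nlinarith [Int.one_le_abs hp, sq_abs (c p), abs_nonneg (c p)]
    have h2 : (c p) ^ 2 ≤ 1 := by
      by_contra hcon
      push_neg at hcon
      have h3 : (2 : ℤ) ≤ (c p) ^ 2 := by omega
      have h4 : (2 : ℝ) ≤ ((c p : ℝ)) ^ 2 := by exact_mod_cast h3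
      have h5 : (1 : ℝ) ≤ ‖b p‖ ^ 2 := by nlinarith [hbnorm p]
      have := hbound p
      nlinarith
    have h6 : c p * c p = 1 := by
      have := le_antisymm h2 h1
      nlinarith
    rcases Int.mul_eq_one_iff_eq_one_or_neg_one.1 h6 with ⟨h, _⟩ | ⟨h, _⟩
    · exact Or.inl h
    · exact Or.inr h
  -- at most one nonzero coefficient
  have huniq : ∀ p q, c p ≠ 0 → c q ≠ 0 → p = q := by
    intro p q hp hq
    by_contra hpq
    -- the tail at p is a lattice vector
    have hsum2 : ∑ i, (if i = p then (0 : ℝ) else (c i : ℝ)) • b i = v p := by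
      rw [← Finset.sum_erase_add _ _ (Finset.mem_univ p), if_pos rfl, zero_smul, add_zero, hv]
      apply Finset.sum_congr rfl
      intro i hi
      rw [if_neg (Finset.mem_erase.1 hi).1]
    have hv0 : v p ≠ 0 := by
      intro h0
      have := Fintype.linearIndependent_iff.1 hb
        (fun i => if i = p then (0 : ℝ) else (c i : ℝ)) (by rw [hsum2, h0]) q
      rw [if_neg (Ne.symm hpq)] at this
      exact hq (by exact_mod_cast this)
    have hvL : v p ∈ latticeOf b := by
      refine ⟨fun i => if i = p then 0 else c i, ?_⟩
      rw [← hsum2]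
      apply Finset.sum_congr rfl
      intro i _
      split_ifs with h <;> simp [h]
    have hs : 1 ≤ ‖v p‖ := hmin.2 _ hvL hv0
    have ht : 1 ≤ ‖b p‖ := hbnorm p
    have hcross : |⟪v p, b p⟫| ≤ ‖v p‖ * ‖b p‖ / 2 :=
      cross_bound (proj_half hn hNO p) (hvV p)
    have hexp : 1 = ‖v p‖ ^ 2 + 2 * (c p : ℝ) * ⟪v p, b p⟫ + ((c p : ℝ)) ^ 2 * ‖b p‖ ^ 2 := by
      have h1 : ‖x‖ ^ 2 = 1 := by rw [hx1]; norm_num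
      rw [hsplit p, norm_add_sq_real, real_inner_smul_right, norm_smul] at h1
      rw [← h1]
      have : ‖(c p : ℝ)‖ = |(c p : ℝ)| := Real.norm_eq_abs _
      rw [this, mul_pow, sq_abs]
      ring
    have hcpsq : ((c p : ℝ)) ^ 2 = 1 := by
      rcases hcp1 p hp with h | h <;> rw [h] <;> norm_num
    set s := ‖v p‖
    set t := ‖b p‖
    set γ : ℝ := ⟪v p, b p⟫ with hγdef
    have hcpabs : |(c p : ℝ)| = 1 := by
      have := sq_abs ((c p : ℝ))
      nlinarith [abs_nonneg ((c p : ℝ))]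
    have h7 : -(s * t / 2) ≤ (c p : ℝ) * γ := by
      have h8 := neg_abs_le ((c p : ℝ) * γ)
      rw [abs_mul, hcpabs, one_mul] at h8
      have h9 := abs_nonneg γ
      linarith [hcross]
    have h6 : s ^ 2 + t ^ 2 - s * t ≤ 1 := by
      rw [hcpsq, one_mul] at hexp
      linarith
    have hst2 : s * t ≤ 1 := by nlinarith [sq_nonneg (s - t)]
    have hs0 : (0:ℝ) ≤ s := le_trans zero_le_one hs
    have ht0 : (0:ℝ) ≤ t := le_trans zero_le_one ht
    have hs1 : s = 1 := by
      have h10 : s * 1 ≤ s * t := mul_le_mul_of_nonneg_left ht hs0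
      rw [mul_one] at h10
      linarith
    have ht1 : t = 1 := by
      have h10 : 1 * t ≤ s * t := mul_le_mul_of_nonneg_right hs ht0
      rw [one_mul] at h10
      linarith
    have hγval : (c p : ℝ) * γ = -(1 / 2) := by
      rw [hcpsq, one_mul, hs1, ht1] at hexp
      linarith
    have hvmin : v p ∈ minVecs (latticeOf b) := mem_minVecs_of_norm_one hmin hvL hs1
    have hxv : x ≠ v p := by
      intro h
      have h2 := hsplit p
      rw [h] at h2
      have h3 : (c p : ℝ) • b p = 0 := by
        have := left_eq_add.1 h2
        exact this
      rcases smul_eq_zero.1 h3 with h4 | h4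
      · exact hp (by exact_mod_cast h4)
      · exact hbne p h4
    have hxnv : x ≠ -(v p) := by
      intro h
      have hsum3 : ∑ i, (if i = p then (c p : ℝ) else 2 * (c i : ℝ)) • b i = 0 := by
        rw [← Finset.sum_erase_add _ _ (Finset.mem_univ p), if_pos rfl]
        have he : ∑ i ∈ Finset.univ.erase p, (if i = p then (c p : ℝ) else 2 * (c i : ℝ)) • b i
            = (2 : ℝ) • v p := by
          rw [hv, Finset.smul_sum]
          apply Finset.sum_congr rfl
          intro i hi
          rw [if_neg (Finset.mem_erase.1 hi).1]
          module
        rw [he]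
        have h2 : x + v p = 0 := by rw [h]; abel
        rw [hsplit p] at h2
        have : (2 : ℝ) • v p + (c p : ℝ) • b p = v p + (c p : ℝ) • b p + v p := by
          module
        rw [this, h2]
      have := Fintype.linearIndependent_iff.1 hb _ hsum3 q
      rw [if_neg (Ne.symm hpq)] at this
      have : (c q : ℝ) = 0 := by linarith
      exact hq (by exact_mod_cast this)
    have horth : ⟪x, v p⟫ = 0 := coherence_zero_orth hC hx hvmin hxv hxnv
    have hcomp : (0 : ℝ) = s ^ 2 + (c p : ℝ) * γ := by
      rw [← horth, hsplit p, inner_add_left, real_inner_smul_left, real_inner_self_eq_norm_sq,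
        real_inner_comm (v p) (b p)]
    rw [hs1] at hcomp
    linarith [hγval]
  -- at least one nonzero coefficient
  have hex : ∃ p, c p ≠ 0 := by
    by_contra hcon
    push_neg at hcon
    apply hx.2.1
    rw [hc]
    apply Finset.sum_eq_zero
    intro i _
    rw [hcon i]
    simp
  obtain ⟨p, hp⟩ := hex
  have hxp : x = (c p : ℝ) • b p := by
    rw [hc, Finset.sum_eq_single p]
    · intro i _ hip
      have : c i = 0 := by
        by_contra h
        exact hip (huniq i p h hp)
      rw [this]; simp
    · intro h; exact absurd (Finset.mem_univ p) h
  have hnormx : 1 = |(c p : ℝ)| * ‖b p‖ := by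
    rw [← hx1, hxp, norm_smul, Real.norm_eq_abs]
  have hcpa : 1 ≤ |(c p : ℝ)| := by
    have := Int.one_le_abs hp
    have h2 : (1 : ℝ) ≤ |c p| := by exact_mod_cast this
    rwa [Int.cast_abs] at h2
  have ht : 1 ≤ ‖b p‖ := hbnorm p
  have habs1 : |(c p : ℝ)| = 1 := by nlinarith
  have hbp1 : ‖b p‖ = 1 := by nlinarith
  refine ⟨p, ?_, hbp1⟩
  rcases abs_eq (by norm_num : (0:ℝ) ≤ 1) |>.1 habs1 with h | h
  · left; rw [hxp, h, one_smul]
  · right; rw [hxp, h]; simp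

/-- `C(L) = 0` iff `L` is spanned over `ℤ` by an orthonormal basis
of `ℝⁿ`, i.e. is the image of `ℤⁿ` under an orthogonal transformation. -/
theorem stmt_7 {n : ℕ} (hn : 2 ≤ n) (b : Fin n → Evec n) (hb : LinearIndependent ℝ b)
    (hWR : IsWellRounded (latticeOf b)) (hmin : hasMinNorm (latticeOf b) 1)
    (hNO : NearlyOrth b) :
    coherence (latticeOf b) = 0 ↔
      ∃ u : Fin n → Evec n, Orthonormal ℝ u ∧ latticeOf u = latticeOf b := by
  constructor
  · intro hC
    refine ⟨b, ?_, rfl⟩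
    haveI : Nonempty (Fin n) := ⟨⟨0, by omega⟩⟩
    have hcard : Fintype.card (Fin n) = Module.finrank ℝ (Evec n) := by
      simp [finrank_euclideanSpace_fin]
    set B := basisOfLinearIndependentOfCardEqFinrank hb hcard with hB
    have hBb : ⇑B = b := coe_basisOfLinearIndependentOfCardEqFinrank hb hcard
    have hbmin : ∀ i, b i ∈ minVecs (latticeOf b) := by
      intro i
      have hexists : ∃ x ∈ minVecs (latticeOf b), B.coord i x ≠ 0 := by
        by_contra hcon
        push_neg at hcon
        have hker : Submodule.span ℝ (minVecs (latticeOf b)) ≤ LinearMap.ker (B.coord i) := by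
          rw [Submodule.span_le]
          intro y hy
          exact LinearMap.mem_ker.2 (hcon y hy)
        rw [hWR] at hker
        have h1 : b i ∈ LinearMap.ker (B.coord i) := hker trivial
        have h2 : B.coord i (b i) = 0 := LinearMap.mem_ker.1 h1
        rw [← hBb, Module.Basis.coord_apply, Module.Basis.repr_self] at h2
        simp at h2
      obtain ⟨x, hxm, hxi⟩ := hexists
      obtain ⟨p, hpm, hp1⟩ := min_is_pm_basis hn hb hmin hNO hC hxm
      have hpi : p = i := by
        by_contra hpi
        apply hxi
        have h0 : B.coord i (b p) = 0 := by
          rw [← hBb, Module.Basis.coord_apply, Module.Basis.repr_self]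
          exact Finsupp.single_eq_of_ne' hpi
        rcases hpm with h | h
        · rw [h, h0]
        · rw [h, map_neg, h0, neg_zero]
      subst hpi
      rcases hpm with h | h
      · rw [← h]; exact hxm
      · have h2 : b p = -x := by rw [h]; simp
        rw [h2]; exact neg_mem_minVecs hxm
    refine ⟨fun i => minVecs_norm_one hmin (hbmin i), fun {i j} hij => ?_⟩
    apply coherence_zero_orth hC (hbmin i) (hbmin j)
    · intro h; exact hij (hb.injective h)
    · intro h
      have hsum : ∑ k, ((Pi.single i 1 + Pi.single j 1 : Fin n → ℝ) k) • b k = 0 := by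
        have h1 : ∑ k, ((Pi.single i 1 + Pi.single j 1 : Fin n → ℝ) k) • b k = b i + b j := by
          simp only [Pi.add_apply, add_smul, Finset.sum_add_distrib]
          rw [sum_single_real, sum_single_real]
        rw [h1, h]
        abel
      have h3 := Fintype.linearIndependent_iff.1 hb _ hsum i
      rw [Pi.add_apply, Pi.single_eq_same, Pi.single_eq_of_ne hij] at h3
      norm_num at h3
  · rintro ⟨u, hu, heq⟩
    have huL : ∀ p : Fin n, u p ∈ latticeOf b := by
      intro p
      rw [← heq]
      exact basis_mem_latticeOf u p
    have humin : ∀ p : Fin n, u p ∈ minVecs (latticeOf b) := fun p =>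
      mem_minVecs_of_norm_one hmin (huL p) (hu.1 p)
    have hne1 : ∀ p q : Fin n, p ≠ q → u p ≠ u q ∧ u p ≠ -u q := by
      intro p q hpq
      have hz : ⟪u p, u q⟫ = 0 := hu.2 hpq
      constructor
      · intro h
        rw [h, real_inner_self_eq_norm_sq, hu.1 q] at hz
        norm_num at hz
      · intro h
        rw [h, inner_neg_left, real_inner_self_eq_norm_sq, hu.1 q] at hz
        norm_num at hz
    have hchar : ∀ x ∈ minVecs (latticeOf b), ∃ p, x = u p ∨ x = -u p := by
      intro x hxm
      have hxL : x ∈ latticeOf u := by rw [heq]; exact hxm.1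
      obtain ⟨c, hc⟩ := hxL
      have hx1 : ‖x‖ = 1 := minVecs_norm_one hmin hxm
      have hsq : ∑ i, ((c i : ℝ)) ^ 2 = 1 := by
        have h1 : ⟪x, x⟫ = ∑ i, (c i : ℝ) * (c i : ℝ) := by
          rw [hc]
          have h2 := hu.inner_sum (fun i => (c i : ℝ)) (fun i => (c i : ℝ)) Finset.univ
          simpa using h2
        rw [real_inner_self_eq_norm_sq, hx1] at h1
        have h3 : ∑ i, ((c i : ℝ)) ^ 2 = ∑ i, (c i : ℝ) * (c i : ℝ) :=
          Finset.sum_congr rfl (fun i _ => by ring)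
        rw [h3, ← h1]
        norm_num
      have hsqZ : ∑ i, (c i) ^ 2 = 1 := by exact_mod_cast hsq
      have hex : ∃ p, c p ≠ 0 := by
        by_contra hcon
        push_neg at hcon
        rw [Finset.sum_eq_zero (fun i _ => by rw [hcon i]; ring)] at hsqZ
        norm_num at hsqZ
      obtain ⟨p, hp⟩ := hex
      have hzero : ∀ q, q ≠ p → c q = 0 := by
        intro q hq
        have h1 : (c p) ^ 2 + ∑ i ∈ Finset.univ.erase p, (c i) ^ 2 = 1 := by
          rw [Finset.add_sum_erase Finset.univ (fun i => (c i) ^ 2) (Finset.mem_univ p)]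
          exact hsqZ
        have h2 : (c q) ^ 2 ≤ ∑ i ∈ Finset.univ.erase p, (c i) ^ 2 :=
          Finset.single_le_sum (fun i _ => sq_nonneg (c i))
            (Finset.mem_erase.2 ⟨hq, Finset.mem_univ q⟩)
        have h3 : 1 ≤ (c p) ^ 2 := by
          nlinarith [Int.one_le_abs hp, sq_abs (c p), abs_nonneg (c p)]
        nlinarith [sq_nonneg (c q)]
      have hcp : c p = 1 ∨ c p = -1 := by
        have h1 : (c p) ^ 2 = 1 := by
          rw [← hsqZ, Finset.sum_eq_single p]
          · intro i _ hip
            rw [hzero i hip]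
            ring
          · intro h; exact absurd (Finset.mem_univ p) h
        have h2 : c p * c p = 1 := by nlinarith
        rcases Int.mul_eq_one_iff_eq_one_or_neg_one.1 h2 with ⟨h, _⟩ | ⟨h, _⟩
        · exact Or.inl h
        · exact Or.inr h
      have hxu : x = (c p : ℝ) • u p := by
        rw [hc, Finset.sum_eq_single p]
        · intro i _ hip
          rw [hzero i hip]
          simp
        · intro h; exact absurd (Finset.mem_univ p) h
      refine ⟨p, ?_⟩
      rcases hcp with h | h
      · left; rw [hxu, h]; simp
      · right; rw [hxu, h]; simp
    have hTsing : {t | ∃ x ∈ minVecs (latticeOf b), ∃ y ∈ minVecs (latticeOf b), x ≠ y ∧ x ≠ -y ∧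
        t = abs ⟪x, y⟫ / (‖x‖ * ‖y‖)} = {0} := by
      ext t
      simp only [Set.mem_setOf_eq, Set.mem_singleton_iff]
      constructor
      · rintro ⟨x, hxm, y, hym, hxy, hxy', rfl⟩
        obtain ⟨p, hp⟩ := hchar x hxm
        obtain ⟨q, hq⟩ := hchar y hym
        have hpq : p ≠ q := by
          intro hh
          subst hh
          rcases hp with hp | hp <;> rcases hq with hq | hq
          · exact hxy (hp.trans hq.symm)
          · exact hxy' (by rw [hp, hq, neg_neg])
          · exact hxy' (by rw [hp, hq])
          · exact hxy (hp.trans hq.symm)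
        have hz2 : ⟪u p, u q⟫ = 0 := hu.2 hpq
        have hin : ⟪x, y⟫ = 0 := by
          rcases hp with hp | hp <;> rcases hq with hq | hq <;> rw [hp, hq] <;>
            simp [inner_neg_left, inner_neg_right, hz2]
        rw [hin]
        simp
      · intro ht
        have h01 : (⟨0, by omega⟩ : Fin n) ≠ ⟨1, by omega⟩ := by
          simp [Fin.ext_iff]
        obtain ⟨hne, hnen⟩ := hne1 ⟨0, by omega⟩ ⟨1, by omega⟩ h01
        refine ⟨u ⟨0, by omega⟩, humin _, u ⟨1, by omega⟩, humin _, hne, hnen, ?_⟩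
        have hz3 : ⟪u ⟨0, by omega⟩, u ⟨1, by omega⟩⟫ = (0:ℝ) := hu.2 h01
        rw [ht, hz3]
        simp
    rw [coherence, hTsing, csSup_singleton]
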